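/- Let G be a finite group and k a field of characteristic 0. Let D(k[G]) be the k-vector space with basis {g⊗δ_x : g, x ∈ G} and multiplication determined k-bilinearly by (g⊗δ_x)·(h⊗δ_y) = (g*h ⊗ δ_y) if x = h*y*h⁻¹, and 0 otherwise. Then: (i) D(k[G]) is an associative unital k-algebra with unit Σ_{x∈G} e⊗δ_x (the Drinfeld double of the group algebra k[G]); and (ii) every G-Frobenius algebra A is a left D(k[G])-module under the action (g⊗δ_x)·a := φ_g(a_x), where a_x denotes the A_x-component of a ∈ A = ⊕_{y∈G} A_y. -/

import Mathlib

/-- A `G`-Frobenius algebra over a field `k` of characteristic zero (Kaufmann):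
a finite-dimensional `G`-graded `k`-vector space `A = ⊕_g A_g` (the grading given by
submodules together with the projections onto them), with an associative bilinear
multiplication respecting the grading, unit `1 ∈ A_e`, a nondegenerate graded invariant
bilinear form `η`, a `G`-action `φ` by algebra automorphisms with
`φ_g(A_h) ⊆ A_{g h g⁻¹}`, and a character `χ : G → kˣ`, satisfying twisted
commutativity, projective self-invariance, projective invariance of the metric and the
projective trace axiom. -/
structure GFrobeniusAlgebra (G : Type) [Group G] [Fintype G]
    (k : Type) [Field k] [CharZero k]
    (A : Type) [AddCommGroup A] [Module k A] : Type where
  grading : G → Submodule k A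
  proj : G → A →ₗ[k] A
  proj_mem : ∀ (g : G) (a : A), proj g a ∈ grading g
  proj_of_mem : ∀ (g : G), ∀ a ∈ grading g, proj g a = a
  proj_of_ne : ∀ (g h : G), g ≠ h → ∀ a ∈ grading g, proj h a = 0
  sum_proj : ∀ a : A, (∑ g : G, proj g a) = a
  finiteDim : FiniteDimensional k A
  mul : A →ₗ[k] A →ₗ[k] A
  mul_assoc' : ∀ a b c : A, mul (mul a b) c = mul a (mul b c)
  one : A
  one_mem : one ∈ grading 1
  one_mul' : ∀ a : A, mul one a = a
  mul_one' : ∀ a : A, mul a one = a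
  mul_mem : ∀ (g h : G), ∀ a ∈ grading g, ∀ b ∈ grading h, mul a b ∈ grading (g * h)
  η : A →ₗ[k] A →ₗ[k] k
  η_nondeg : ∀ a : A, (∀ b : A, η a b = 0) → a = 0
  η_graded : ∀ (g h : G), g * h ≠ 1 → ∀ a ∈ grading g, ∀ b ∈ grading h, η a b = 0
  η_invariant : ∀ a b c : A, η a (mul b c) = η (mul a b) c
  φ : G → A →ₗ[k] A
  φ_one : φ 1 = LinearMap.id
  φ_mul : ∀ g h : G, φ (g * h) = φ g ∘ₗ φ h
  φ_algebra : ∀ (g : G) (a b : A), φ g (mul a b) = mul (φ g a) (φ g b)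
  φ_unit : ∀ g : G, φ g one = one
  φ_grading : ∀ (g h : G), ∀ a ∈ grading h, φ g a ∈ grading (g * h * g⁻¹)
  χ : G →* kˣ
  twisted_comm : ∀ (g : G), ∀ a ∈ grading g, ∀ b : A, mul a b = mul (φ g b) a
  self_invariance : ∀ (g : G), ∀ a ∈ grading g, φ g a = (((χ g)⁻¹ : kˣ) : k) • a
  metric_invariance : ∀ (g : G) (a b : A),
    η (φ g a) (φ g b) = ((((χ g)⁻¹ : kˣ) : k)) ^ 2 * η a b
  trace_axiom : ∀ (g h : G), ∀ c ∈ grading (g * h * g⁻¹ * h⁻¹),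
    ((χ h : kˣ) : k) * LinearMap.trace k A (proj g ∘ₗ mul c ∘ₗ φ h ∘ₗ proj g)
      = ((χ g⁻¹ : kˣ) : k) * LinearMap.trace k A (proj h ∘ₗ φ g⁻¹ ∘ₗ mul c ∘ₗ proj h)

/-- The multiplication of the Drinfeld double `D(k[G])` on the space `(G × G) →₀ k`
with basis `g ⊗ δ_x = Finsupp.single (g, x) 1`, determined bilinearly by
`(g⊗δ_x)·(h⊗δ_y) = g*h ⊗ δ_y` if `x = h*y*h⁻¹` and `0` otherwise. -/
noncomputable def doubleMul {G : Type} [Group G] [DecidableEq G] {k : Type} [Field k]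
    (f₁ f₂ : (G × G) →₀ k) : (G × G) →₀ k :=
  f₁.sum fun p a => f₂.sum fun q b =>
    if p.2 = q.1 * q.2 * q.1⁻¹ then Finsupp.single (p.1 * q.1, q.2) (a * b) else 0

/-- The unit `Σ_x e ⊗ δ_x` of the Drinfeld double `D(k[G])`. -/
noncomputable def doubleOne (G : Type) [Group G] [Fintype G] (k : Type) [Field k] :
    (G × G) →₀ k :=
  ∑ x : G, Finsupp.single ((1 : G), x) (1 : k)

/-- The action of the Drinfeld double `D(k[G])` on a `G`-Frobenius algebra `A`:
`(g ⊗ δ_x) · a := φ_g(a_x)`, where `a_x` is the `A_x`-component of `a`. -/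
noncomputable def doubleAct {G : Type} [Group G] [Fintype G] {k : Type} [Field k]
    [CharZero k] {A : Type} [AddCommGroup A] [Module k A]
    (F : GFrobeniusAlgebra G k A) (f : (G × G) →₀ k) (a : A) : A :=
  f.sum fun p c => c • F.φ p.1 (F.proj p.2 a)


section Aux

open Finsupp

variable {G : Type} [Group G] [DecidableEq G] {k : Type} [Field k]

lemma doubleMul_single_single (p q : G × G) (a b : k) :
    doubleMul (Finsupp.single p a) (Finsupp.single q b) =
      if p.2 = q.1 * q.2 * q.1⁻¹ then Finsupp.single (p.1 * q.1, q.2) (a * b) else 0 := by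
  unfold doubleMul
  rw [Finsupp.sum_single_index, Finsupp.sum_single_index]
  · split <;> simp
  · rw [Finsupp.sum_single_index] <;> split <;> simp

lemma doubleMul_add_left (f₁ f₂ f₃ : (G × G) →₀ k) :
    doubleMul (f₁ + f₂) f₃ = doubleMul f₁ f₃ + doubleMul f₂ f₃ := by
  unfold doubleMul
  rw [Finsupp.sum_add_index]
  · intro p _
    rw [Finsupp.sum]
    apply Finset.sum_eq_zero
    intro q _
    split <;> simp
  · intro p _ a₁ a₂
    rw [← Finsupp.sum_add]
    refine Finsupp.sum_congr fun q _ => ?_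
    split <;> simp [add_mul, Finsupp.single_add]

lemma doubleMul_add_right (f₁ f₂ f₃ : (G × G) →₀ k) :
    doubleMul f₁ (f₂ + f₃) = doubleMul f₁ f₂ + doubleMul f₁ f₃ := by
  unfold doubleMul
  rw [← Finsupp.sum_add]
  refine Finsupp.sum_congr fun p _ => ?_
  rw [Finsupp.sum_add_index]
  · intro q _
    split <;> simp
  · intro q _ b₁ b₂
    split <;> simp [mul_add, Finsupp.single_add]

lemma doubleMul_smul_left (c : k) (f₁ f₂ : (G × G) →₀ k) :
    doubleMul (c • f₁) f₂ = c • doubleMul f₁ f₂ := by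
  unfold doubleMul
  rw [Finsupp.sum_smul_index]
  · rw [Finsupp.smul_sum]
    refine Finsupp.sum_congr fun p _ => ?_
    rw [Finsupp.smul_sum]
    refine Finsupp.sum_congr fun q _ => ?_
    split
    · rw [Finsupp.smul_single, smul_eq_mul, mul_assoc]
    · simp
  · intro p
    rw [Finsupp.sum]
    apply Finset.sum_eq_zero
    intro q _
    split <;> simp

lemma doubleMul_smul_right (c : k) (f₁ f₂ : (G × G) →₀ k) :
    doubleMul f₁ (c • f₂) = c • doubleMul f₁ f₂ := by
  unfold doubleMul
  rw [Finsupp.smul_sum]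
  refine Finsupp.sum_congr fun p _ => ?_
  rw [Finsupp.sum_smul_index]
  · rw [Finsupp.smul_sum]
    refine Finsupp.sum_congr fun q _ => ?_
    split
    · rw [Finsupp.smul_single, smul_eq_mul, mul_left_comm]
    · simp
  · intro q
    split <;> simp

lemma doubleMul_zero_left (f : (G × G) →₀ k) : doubleMul 0 f = 0 := by
  unfold doubleMul
  rw [Finsupp.sum_zero_index]

lemma doubleMul_zero_right (f : (G × G) →₀ k) : doubleMul f 0 = 0 := by
  unfold doubleMul
  simp [Finsupp.sum_zero_index]


lemma doubleMul_assoc (f₁ f₂ f₃ : (G × G) →₀ k) :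
    doubleMul (doubleMul f₁ f₂) f₃ = doubleMul f₁ (doubleMul f₂ f₃) := by
  induction f₁ using Finsupp.induction_linear with
  | zero => simp [doubleMul_zero_left]
  | add f g hf hg => simp [doubleMul_add_left, hf, hg]
  | single p a =>
    induction f₂ using Finsupp.induction_linear with
    | zero => simp [doubleMul_zero_left, doubleMul_zero_right]
    | add f g hf hg => simp [doubleMul_add_left, doubleMul_add_right, hf, hg]
    | single q b =>
      induction f₃ using Finsupp.induction_linear with
      | zero => simp [doubleMul_zero_right]
      | add f g hf hg => simp [doubleMul_add_right, hf, hg]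
      | single r c =>
        rw [doubleMul_single_single p q, doubleMul_single_single q r]
        by_cases h1 : p.2 = q.1 * q.2 * q.1⁻¹ <;>
          by_cases h2 : q.2 = r.1 * r.2 * r.1⁻¹
        · rw [if_pos h1, if_pos h2, doubleMul_single_single, doubleMul_single_single,
            if_pos h2, if_pos (show p.2 = q.1 * r.1 * r.2 * (q.1 * r.1)⁻¹ by
              rw [h1, h2]; group)]
          simp [mul_assoc]
        · rw [if_pos h1, if_neg h2, doubleMul_single_single, if_neg h2,
            doubleMul_zero_right]
        · rw [if_neg h1, if_pos h2, doubleMul_zero_left, doubleMul_single_single,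
            if_neg (show ¬ p.2 = q.1 * r.1 * r.2 * (q.1 * r.1)⁻¹ from fun hc =>
              h1 (by rw [hc, h2]; group))]
        · rw [if_neg h1, if_neg h2, doubleMul_zero_left, doubleMul_zero_right]

lemma doubleMul_sum_left {ι : Type*} (s : Finset ι) (g : ι → ((G × G) →₀ k))
    (f : (G × G) →₀ k) :
    doubleMul (∑ i ∈ s, g i) f = ∑ i ∈ s, doubleMul (g i) f := by
  induction s using Finset.cons_induction with
  | empty => simp [doubleMul_zero_left]
  | cons i s hi ih => simp [Finset.sum_cons, doubleMul_add_left, ih]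

lemma doubleMul_sum_right {ι : Type*} (s : Finset ι) (g : ι → ((G × G) →₀ k))
    (f : (G × G) →₀ k) :
    doubleMul f (∑ i ∈ s, g i) = ∑ i ∈ s, doubleMul f (g i) := by
  induction s using Finset.cons_induction with
  | empty => simp [doubleMul_zero_right]
  | cons i s hi ih => simp [Finset.sum_cons, doubleMul_add_right, ih]

lemma doubleOne_mul [Fintype G] (f : (G × G) →₀ k) :
    doubleMul (doubleOne G k) f = f := by
  induction f using Finsupp.induction_linear with
  | zero => simp [doubleMul_zero_right]
  | add f g hf hg => simp [doubleMul_add_right, hf, hg]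
  | single q b =>
    rw [doubleOne, doubleMul_sum_left]
    simp [doubleMul_single_single, Finset.sum_ite_eq']

lemma mul_doubleOne [Fintype G] (f : (G × G) →₀ k) :
    doubleMul f (doubleOne G k) = f := by
  induction f using Finsupp.induction_linear with
  | zero => simp [doubleMul_zero_left]
  | add f g hf hg => simp [doubleMul_add_left, hf, hg]
  | single p a =>
    rw [doubleOne, doubleMul_sum_right]
    simp [doubleMul_single_single, Finset.sum_ite_eq]

variable [Fintype G] [CharZero k] {A : Type} [AddCommGroup A] [Module k A]
  (F : GFrobeniusAlgebra G k A)

lemma doubleAct_single (p : G × G) (c : k) (a : A) :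
    doubleAct F (Finsupp.single p c) a = c • F.φ p.1 (F.proj p.2 a) := by
  unfold doubleAct
  rw [Finsupp.sum_single_index]
  simp

lemma doubleAct_add_left (f₁ f₂ : (G × G) →₀ k) (a : A) :
    doubleAct F (f₁ + f₂) a = doubleAct F f₁ a + doubleAct F f₂ a := by
  unfold doubleAct
  rw [Finsupp.sum_add_index] <;> simp [add_smul]

lemma doubleAct_smul_left (c : k) (f : (G × G) →₀ k) (a : A) :
    doubleAct F (c • f) a = c • doubleAct F f a := by
  unfold doubleAct
  rw [Finsupp.sum_smul_index]
  · rw [Finsupp.smul_sum]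
    simp [mul_smul]
  · intro p; simp

lemma doubleAct_zero_left (a : A) : doubleAct F (0 : (G × G) →₀ k) a = 0 := by
  unfold doubleAct
  rw [Finsupp.sum_zero_index]

lemma doubleAct_add_right (f : (G × G) →₀ k) (a b : A) :
    doubleAct F f (a + b) = doubleAct F f a + doubleAct F f b := by
  unfold doubleAct
  rw [← Finsupp.sum_add]
  refine Finsupp.sum_congr fun p _ => ?_
  simp [smul_add]

lemma doubleAct_smul_right (c : k) (f : (G × G) →₀ k) (a : A) :
    doubleAct F f (c • a) = c • doubleAct F f a := by
  unfold doubleAct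
  rw [Finsupp.smul_sum]
  refine Finsupp.sum_congr fun p _ => ?_
  simp [smul_comm _ c]


lemma doubleAct_sum_left {ι : Type*} (s : Finset ι) (g : ι → ((G × G) →₀ k)) (a : A) :
    doubleAct F (∑ i ∈ s, g i) a = ∑ i ∈ s, doubleAct F (g i) a := by
  induction s using Finset.cons_induction with
  | empty => simp [doubleAct_zero_left]
  | cons i s hi ih => simp [Finset.sum_cons, doubleAct_add_left, ih]

lemma doubleAct_one (a : A) : doubleAct F (doubleOne G k) a = a := by
  rw [doubleOne, doubleAct_sum_left]
  simp only [doubleAct_single, one_smul, F.φ_one, LinearMap.id_coe, id_eq]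
  exact F.sum_proj a

lemma doubleAct_mul (f₁ f₂ : (G × G) →₀ k) (a : A) :
    doubleAct F (doubleMul f₁ f₂) a = doubleAct F f₁ (doubleAct F f₂ a) := by
  induction f₁ using Finsupp.induction_linear with
  | zero => simp [doubleMul_zero_left, doubleAct_zero_left]
  | add f g hf hg => simp [doubleMul_add_left, doubleAct_add_left, hf, hg]
  | single p c =>
    induction f₂ using Finsupp.induction_linear with
    | zero => simp [doubleMul_zero_right, doubleAct_zero_left, doubleAct_single]
    | add f g hf hg =>
      simp [doubleMul_add_right, doubleAct_add_left, doubleAct_add_right, hf, hg]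
    | single q b =>
      rw [doubleMul_single_single, doubleAct_single, doubleAct_single]
      by_cases h : p.2 = q.1 * q.2 * q.1⁻¹
      · have hmem : F.φ q.1 (F.proj q.2 a) ∈ F.grading p.2 := by
          rw [h]; exact F.φ_grading q.1 q.2 _ (F.proj_mem q.2 a)
        rw [if_pos h, doubleAct_single]
        simp only [map_smul]
        rw [F.proj_of_mem p.2 _ hmem, F.φ_mul]
        simp [mul_smul]
      · rw [if_neg h, doubleAct_zero_left]
        simp only [map_smul]
        rw [F.proj_of_ne (q.1 * q.2 * q.1⁻¹) p.2 (fun hc => h hc.symm) _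
            (F.φ_grading q.1 q.2 _ (F.proj_mem q.2 a))]
        simp

end Aux

/-- (i) The Drinfeld double `D(k[G])` is an associative unital `k`-algebra with
unit `Σ_x e⊗δ_x`; (ii) every `G`-Frobenius algebra `A` is a left `D(k[G])`-module under
`(g⊗δ_x)·a := φ_g(a_x)`. -/
theorem drinfeld_double_and_module (G : Type) [Group G] [Fintype G] [DecidableEq G]
    (k : Type) [Field k] [CharZero k] :
    -- (i) `D(k[G])` is an associative unital `k`-algebra
    ((∀ f₁ f₂ f₃ : (G × G) →₀ k,
        doubleMul (f₁ + f₂) f₃ = doubleMul f₁ f₃ + doubleMul f₂ f₃) ∧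
      (∀ f₁ f₂ f₃ : (G × G) →₀ k,
        doubleMul f₁ (f₂ + f₃) = doubleMul f₁ f₂ + doubleMul f₁ f₃) ∧
      (∀ (c : k) (f₁ f₂ : (G × G) →₀ k), doubleMul (c • f₁) f₂ = c • doubleMul f₁ f₂) ∧
      (∀ (c : k) (f₁ f₂ : (G × G) →₀ k), doubleMul f₁ (c • f₂) = c • doubleMul f₁ f₂) ∧
      (∀ f₁ f₂ f₃ : (G × G) →₀ k,
        doubleMul (doubleMul f₁ f₂) f₃ = doubleMul f₁ (doubleMul f₂ f₃)) ∧
      (∀ f : (G × G) →₀ k, doubleMul (doubleOne G k) f = f) ∧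
      (∀ f : (G × G) →₀ k, doubleMul f (doubleOne G k) = f)) ∧
    -- (ii) every `G`-Frobenius algebra is a left `D(k[G])`-module
    (∀ (A : Type) [AddCommGroup A] [Module k A] (F : GFrobeniusAlgebra G k A),
      (∀ (f₁ f₂ : (G × G) →₀ k) (a : A),
        doubleAct F (doubleMul f₁ f₂) a = doubleAct F f₁ (doubleAct F f₂ a)) ∧
      (∀ a : A, doubleAct F (doubleOne G k) a = a) ∧
      (∀ (f₁ f₂ : (G × G) →₀ k) (a : A),
        doubleAct F (f₁ + f₂) a = doubleAct F f₁ a + doubleAct F f₂ a) ∧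
      (∀ (f : (G × G) →₀ k) (a b : A),
        doubleAct F f (a + b) = doubleAct F f a + doubleAct F f b) ∧
      (∀ (c : k) (f : (G × G) →₀ k) (a : A),
        doubleAct F (c • f) a = c • doubleAct F f a) ∧
      (∀ (c : k) (f : (G × G) →₀ k) (a : A),
        doubleAct F f (c • a) = c • doubleAct F f a)) := by
  
  refine ⟨⟨doubleMul_add_left, doubleMul_add_right, doubleMul_smul_left,
    doubleMul_smul_right, doubleMul_assoc, doubleOne_mul, mul_doubleOne⟩,
    fun A _ _ F => ⟨doubleAct_mul F, doubleAct_one F, doubleAct_add_left F,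
      doubleAct_add_right F, doubleAct_smul_left F, doubleAct_smul_right F⟩⟩
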